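/- The entries of the matrix P = U* Q U (with U the 2n-point discrete Fourier transform and Q the projection onto the first n coordinates) are P(k,l) = 1/2 if k = l; 0 if k ≠ l and k−l is even; and (1/n)·1/(1 − exp(−2πi(k−l)/(2n))) if k−l is odd. Moreover |P(k,l)| ≤ C·min(|k−l|, 2n−|k−l|)^{−1} for k ≠ l for some absolute constant C. -/

import Mathlib

open Matrix Complex Real

/-- The `2n`-point discrete Fourier transform matrix. -/
noncomputable def dftU (n : ℕ) : Matrix (Fin (2 * n)) (Fin (2 * n)) ℂ :=
  fun j k => ((1 / Real.sqrt (2 * n) : ℝ) : ℂ) *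
    Complex.exp (2 * Real.pi * Complex.I * (j : ℕ) * (k : ℕ) / (2 * n))

/-- The diagonal projection onto the first `n` coordinates. -/
def Qproj (n : ℕ) : Matrix (Fin (2 * n)) (Fin (2 * n)) ℂ :=
  Matrix.diagonal (fun i => if (i : ℕ) < n then (1 : ℂ) else 0)

/-- `P = U* Q U`. -/
noncomputable def Pmat (n : ℕ) : Matrix (Fin (2 * n)) (Fin (2 * n)) ℂ :=
  (dftU n)ᴴ * Qproj n * dftU n

lemma norm_one_sub_exp (θ : ℝ) :
    ‖1 - Complex.exp (θ * Complex.I)‖ = 2 * |Real.sin (θ / 2)| := by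
  have h : (1 : ℂ) - Complex.exp (θ * Complex.I)
      = ((1 - Real.cos θ : ℝ) : ℂ) + ((-Real.sin θ : ℝ) : ℂ) * Complex.I := by
    rw [Complex.exp_mul_I]
    rw [← Complex.ofReal_cos, ← Complex.ofReal_sin]
    push_cast
    ring
  rw [h, Complex.norm_add_mul_I]
  have hs := Real.sin_sq_eq_half_sub (θ / 2)
  rw [show 2 * (θ / 2) = θ by ring] at hs
  have hsin := Real.sin_sq_add_cos_sq θ
  have h2 : (1 - Real.cos θ) ^ 2 + (-Real.sin θ) ^ 2 = (2 * |Real.sin (θ / 2)|) ^ 2 := by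
    have : |Real.sin (θ / 2)| ^ 2 = Real.sin (θ / 2) ^ 2 := sq_abs _
    nlinarith [this]
  rw [h2, Real.sqrt_sq (by positivity)]

lemma sin_lower (n : ℕ) (hn : 1 ≤ n) (d : ℤ) (hd : d ≠ 0) (hlt : d.natAbs < 2 * n) :
    (min d.natAbs (2 * n - d.natAbs) : ℕ) / (n : ℝ) ≤ |Real.sin (π * d / (2 * n))| := by
  set a := d.natAbs with ha
  have ha1 : 1 ≤ a := Nat.one_le_iff_ne_zero.mpr (by simpa [ha] using hd)
  have hnp : (0 : ℝ) < n := by exact_mod_cast hn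
  have habs : |Real.sin (π * d / (2 * n))| = |Real.sin (π * a / (2 * n))| := by
    rcases Int.natAbs_eq d with h | h
    · have : ((d : ℤ) : ℝ) = (a : ℝ) := by
        conv_lhs => rw [h]
        simp [ha, Nat.cast_natAbs]
      rw [this]
    · have : ((d : ℤ) : ℝ) = -(a : ℝ) := by
        conv_lhs => rw [h]
        simp [ha, Nat.cast_natAbs]
      rw [this, show π * -(a : ℝ) / (2 * n) = -(π * a / (2 * n)) by ring,
        Real.sin_neg, abs_neg]
  rw [habs]
  set m := min a (2 * n - a) with hm
  have hmn : m ≤ n := by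
    rcases le_or_gt a n with h | h
    · exact le_trans (min_le_left _ _) h
    · exact le_trans (min_le_right _ _) (by omega)
  have hm1 : 1 ≤ m := by omega
  have hsin_eq : Real.sin (π * a / (2 * n)) = Real.sin (π * m / (2 * n)) := by
    rcases le_or_gt a n with h | h
    · have : m = a := by omega
      rw [this]
    · have hma : m = 2 * n - a := by omega
      have hcast : (m : ℝ) = 2 * n - a := by
        rw [hma, Nat.cast_sub (by omega : a ≤ 2 * n)]; push_cast; ring
      rw [← Real.sin_pi_sub]
      congr 1
      rw [hcast]
      field_simp
  rw [hsin_eq]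
  have harg0 : 0 ≤ π * m / (2 * n) := by positivity
  have harg2 : π * m / (2 * n) ≤ π / 2 := by
    rw [div_le_div_iff₀ (by positivity) (by norm_num)]
    have : (m : ℝ) ≤ n := by exact_mod_cast hmn
    nlinarith [Real.pi_pos]
  have hjordan := Real.mul_le_sin harg0 harg2
  have heq : 2 / π * (π * m / (2 * n)) = m / n := by
    field_simp
  rw [heq] at hjordan
  calc (m : ℝ) / n ≤ Real.sin (π * m / (2 * n)) := hjordan
    _ ≤ |Real.sin (π * m / (2 * n))| := le_abs_self _

lemma Pmat_sum (n : ℕ) (hn : 1 ≤ n) (k l : Fin (2 * n)) :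
    Pmat n k l = (1 / (2 * n : ℂ)) * ∑ j ∈ Finset.range n,
      (Complex.exp (2 * Real.pi * Complex.I * (((l : ℤ) - (k : ℤ) : ℤ) : ℂ) / (2 * n))) ^ j := by
  have hnR : (0 : ℝ) < 2 * n := by positivity
  have hn0 : (n : ℂ) ≠ 0 := Nat.cast_ne_zero.mpr (by omega)
  have hnC : (2 * (n : ℂ)) ≠ 0 := by simp [hn0]
  set z : ℂ := Complex.exp (2 * Real.pi * Complex.I * (((l : ℤ) - (k : ℤ) : ℤ) : ℂ) / (2 * n)) with hz
  have key : ∀ j : Fin (2 * n),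
      (dftU n)ᴴ k j * (if (j : ℕ) < n then (1 : ℂ) else 0) * dftU n j l
        = if (j : ℕ) < n then (1 / (2 * n : ℂ)) * z ^ (j : ℕ) else 0 := by
    intro j
    by_cases hj : (j : ℕ) < n
    · simp only [hj, if_true, mul_one]
      have hconj : (starRingEnd ℂ) (2 * (Real.pi : ℂ) * Complex.I * ((j : ℕ) : ℂ) * ((k : ℕ) : ℂ) / (2 * (n : ℕ)))
          = -(2 * (Real.pi : ℂ) * Complex.I * ((j : ℕ) : ℂ) * ((k : ℕ) : ℂ) / (2 * (n : ℕ))) := by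
        simp only [map_div₀, _root_.map_mul, Complex.conj_I, Complex.conj_ofReal,
          map_ofNat, Complex.conj_natCast]
        ring
      rw [Matrix.conjTranspose_apply]
      simp only [dftU]
      simp only [RCLike.star_def, _root_.map_mul, Complex.conj_ofReal, ← Complex.exp_conj, hconj]
      rw [mul_mul_mul_comm, ← Complex.exp_add, ← Complex.ofReal_mul]
      have hsq : 1 / Real.sqrt (2 * n) * (1 / Real.sqrt (2 * n)) = 1 / (2 * n) := by
        rw [div_mul_div_comm, one_mul, Real.mul_self_sqrt hnR.le]
      rw [hsq]
      have hexp : -(2 * (Real.pi : ℂ) * Complex.I * ((j : ℕ) : ℂ) * ((k : ℕ) : ℂ) / (2 * (n : ℕ)))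
          + 2 * (Real.pi : ℂ) * Complex.I * ((j : ℕ) : ℂ) * ((l : ℕ) : ℂ) / (2 * (n : ℕ))
          = ((j : ℕ) : ℂ) * (2 * Real.pi * Complex.I * (((l : ℤ) - (k : ℤ) : ℤ) : ℂ) / (2 * n)) := by
        push_cast
        field_simp
        ring
      rw [hexp, Complex.exp_nat_mul, hz]
      push_cast
      ring
    · simp [hj]
  calc Pmat n k l = ∑ j : Fin (2 * n),
        (dftU n)ᴴ k j * (if (j : ℕ) < n then (1 : ℂ) else 0) * dftU n j l := by
        rw [Pmat, Matrix.mul_apply]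
        congr 1; ext j
        rw [Qproj, Matrix.mul_diagonal]
    _ = ∑ j : Fin (2 * n), (if (j : ℕ) < n then (1 / (2 * n : ℂ)) * z ^ (j : ℕ) else 0) := by
        exact Finset.sum_congr rfl (fun j _ => key j)
    _ = ∑ j ∈ Finset.range (2 * n), (if j < n then (1 / (2 * n : ℂ)) * z ^ j else 0) :=
        Fin.sum_univ_eq_sum_range (fun j => if j < n then (1 / (2 * n : ℂ)) * z ^ j else 0) (2 * n)
    _ = ∑ j ∈ Finset.range n, (if j < n then (1 / (2 * n : ℂ)) * z ^ j else 0) := by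
        refine (Finset.sum_subset (Finset.range_subset_range.mpr (by omega)) ?_).symm
        intro x _ hx
        simp only [Finset.mem_range] at hx
        simp [hx]
    _ = (1 / (2 * n : ℂ)) * ∑ j ∈ Finset.range n, z ^ j := by
        rw [Finset.mul_sum]
        exact Finset.sum_congr rfl (fun j hj => by
          simp [Finset.mem_range.mp hj])

lemma Pmat_formula (n : ℕ) (hn : 1 ≤ n) (k l : Fin (2 * n)) :
    Pmat n k l =
      if k = l then (1 / 2 : ℂ)
      else if Even ((k : ℤ) - (l : ℤ)) then 0
      else (1 / (n : ℂ)) *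
        (1 - Complex.exp (-(2 * Real.pi * Complex.I * (((k : ℤ) - (l : ℤ)) : ℤ)) /
          (2 * n)))⁻¹ := by
  have hn0 : (n : ℂ) ≠ 0 := Nat.cast_ne_zero.mpr (by omega)
  have hnC : (2 * (n : ℂ)) ≠ 0 := by simp [hn0]
  rw [Pmat_sum n hn k l]
  set d : ℤ := (l : ℤ) - (k : ℤ) with hd
  set z : ℂ := Complex.exp (2 * Real.pi * Complex.I * (d : ℂ) / (2 * n)) with hz
  by_cases hkl : k = l
  · subst hkl
    have : d = 0 := by omega
    rw [if_pos rfl]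
    simp only [this] at hz
    have hz1 : z = 1 := by rw [hz]; norm_num
    rw [hz1]
    simp only [one_pow, Finset.sum_const, Finset.card_range, nsmul_eq_mul, mul_one]
    field_simp
  · rw [if_neg hkl]
    have hd0 : d ≠ 0 := by
      intro h
      apply hkl
      have : (k : ℕ) = (l : ℕ) := by omega
      exact Fin.ext this
    have hdlt : d.natAbs < 2 * n := by
      have hk := k.isLt; have hl := l.isLt
      omega
    have hzne : z ≠ 1 := by
      intro h
      rw [hz, Complex.exp_eq_one_iff] at h
      obtain ⟨m, hm⟩ := h
      rw [div_eq_iff hnC] at hm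
      have h2πI : (2 * (Real.pi : ℂ) * Complex.I) ≠ 0 := by
        simp [Complex.I_ne_zero, Complex.ofReal_ne_zero.mpr Real.pi_ne_zero]
      have hdm : (d : ℂ) = (m : ℂ) * (2 * n) := by
        apply mul_left_cancel₀ h2πI
        linear_combination hm
      have hdm' : d = m * (2 * (n : ℤ)) := by exact_mod_cast hdm
      have hm0 : m ≠ 0 := by intro h0; rw [h0] at hdm'; simp at hdm'; exact hd0 hdm'
      have hm1 : (1 : ℤ) ≤ |m| := Int.one_le_abs hm0
      have h1 : 2 * (n : ℤ) ≤ |d| := by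
        rw [hdm', abs_mul]
        have h2 : |(2 * (n : ℤ))| = 2 * (n : ℤ) := abs_of_nonneg (by positivity)
        rw [h2]
        nlinarith
      have h2 : ((d.natAbs : ℤ)) = |d| := (Int.abs_eq_natAbs d).symm
      omega
    rw [geom_sum_eq hzne]
    have hzn : z ^ n = ((-1 : ℂ)) ^ d := by
      rw [hz, ← Complex.exp_nat_mul]
      have harg : (n : ℂ) * (2 * (Real.pi : ℂ) * Complex.I * (d : ℂ) / (2 * (n : ℕ)))
          = (d : ℂ) * ((Real.pi : ℂ) * Complex.I) := by
        field_simp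
      rw [harg, Complex.exp_int_mul, Complex.exp_pi_mul_I]
    by_cases hev : Even ((k : ℤ) - (l : ℤ))
    · rw [if_pos hev]
      have hevd : Even d := by
        have : d = -((k : ℤ) - (l : ℤ)) := by omega
        rw [this]
        exact hev.neg
      rw [hzn, hevd.neg_one_zpow]
      simp
    · rw [if_neg hev]
      have hodd : Odd d := by
        rcases Int.even_or_odd d with h | h
        · exfalso; apply hev
          have : (k : ℤ) - (l : ℤ) = -d := by omega
          rw [this]; exact h.neg
        · exact h
      rw [hzn, hodd.neg_one_zpow]
      have hexp_eq : Complex.exp (-(2 * (Real.pi : ℂ) * Complex.I * (((k : ℤ) - (l : ℤ) : ℤ) : ℂ)) / (2 * (n : ℕ)))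
          = z := by
        rw [hz]
        congr 1
        have : (((k : ℤ) - (l : ℤ) : ℤ) : ℂ) = -(d : ℂ) := by
          push_cast [hd]; ring
        rw [this]
        ring
      rw [hexp_eq]
      have hz1 : (1 : ℂ) - z ≠ 0 := sub_ne_zero.mpr (Ne.symm hzne)
      have hz1' : z - 1 ≠ 0 := sub_ne_zero.mpr hzne
      field_simp
      ring

/-- The entries of `P = U* Q U` are `1/2` on the diagonal, `0` for even nonzero `k − l`,
and `(1/n)(1 − exp(−2πi(k−l)/(2n)))⁻¹` for odd `k − l`; moreover
`|P(k,l)| ≤ C·min(|k−l|, 2n−|k−l|)⁻¹` for `k ≠ l`, for an absolute constant `C`. -/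
theorem Pmat_entries_and_decay :
    (∀ n : ℕ, 1 ≤ n → ∀ k l : Fin (2 * n),
      Pmat n k l =
        if k = l then (1 / 2 : ℂ)
        else if Even ((k : ℤ) - (l : ℤ)) then 0
        else (1 / (n : ℂ)) *
          (1 - Complex.exp (-(2 * Real.pi * Complex.I * (((k : ℤ) - (l : ℤ)) : ℤ)) /
            (2 * n)))⁻¹) ∧
    ∃ C : ℝ, ∀ n : ℕ, 1 ≤ n → ∀ k l : Fin (2 * n), k ≠ l →
      ‖Pmat n k l‖ ≤
        C / (min (((k : ℤ) - (l : ℤ)).natAbs) (2 * n - ((k : ℤ) - (l : ℤ)).natAbs) : ℕ) := by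
  constructor
  · exact fun n hn k l => Pmat_formula n hn k l
  · refine ⟨1, fun n hn k l hkl => ?_⟩
    have hnp : (0 : ℝ) < n := by exact_mod_cast hn
    set e : ℤ := (k : ℤ) - (l : ℤ) with he
    have he0 : e ≠ 0 := by
      intro h
      apply hkl
      have : (k : ℕ) = (l : ℕ) := by omega
      exact Fin.ext this
    have helt : e.natAbs < 2 * n := by
      have hk := k.isLt; have hl := l.isLt
      omega
    set m : ℕ := min e.natAbs (2 * n - e.natAbs) with hm
    have hm1 : 1 ≤ m := by omega
    have hmp : (0 : ℝ) < m := by exact_mod_cast hm1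
    rw [Pmat_formula n hn k l, if_neg hkl]
    by_cases hev : Even e
    · rw [if_pos hev]
      rw [norm_zero]
      positivity
    · rw [if_neg hev]
      set θ : ℝ := -(2 * π * e) / (2 * n) with hθ
      have harg : -(2 * (Real.pi : ℂ) * Complex.I * ((e : ℤ) : ℂ)) / (2 * (n : ℕ))
          = ((θ : ℝ) : ℂ) * Complex.I := by
        rw [hθ]
        push_cast
        ring
      rw [harg]
      rw [norm_mul, norm_inv, norm_one_sub_exp]
      have hθ2 : |Real.sin (θ / 2)| = |Real.sin (π * e / (2 * n))| := by
        have : θ / 2 = -(π * e / (2 * n)) := by rw [hθ]; ring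
        rw [this, Real.sin_neg, abs_neg]
      rw [hθ2]
      set s : ℝ := |Real.sin (π * e / (2 * n))| with hs
      have hlow : (m : ℝ) / n ≤ s := sin_lower n hn e he0 helt
      have hspos : (0 : ℝ) < s := lt_of_lt_of_le (by positivity) hlow
      have hnorm : ‖(1 / (n : ℂ))‖ = 1 / (n : ℝ) := by
        rw [norm_div, norm_one, Complex.norm_natCast]
      rw [hnorm]
      have hkey : (m : ℝ) ≤ n * (2 * s) := by
        have h1 : (m : ℝ) ≤ s * n := (div_le_iff₀ hnp).mp hlow
        nlinarith
      calc 1 / (n : ℝ) * (2 * s)⁻¹ = 1 / ((n : ℝ) * (2 * s)) := by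
            rw [one_div, one_div, ← mul_inv]
        _ ≤ 1 / (m : ℝ) := one_div_le_one_div_of_le hmp hkey
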